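/- Let δ ∈ (0,1) and ε ∈ (0,1). Define f_ε : [0,1] → ℝ by f_ε(x) = |log ε|^δ for x ∈ [0, ε] and f_ε(x) = |log x|^δ for x ∈ (ε, 1]. Then f_ε is δ-Hölder with constant ε^{−δ}; that is, |f_ε(x) − f_ε(y)| ≤ ε^{−δ} |x − y|^δ for all x, y ∈ [0,1]. -/

import Mathlib

open MeasureTheory Set

/-- The truncated observable `f_ε(x) = |log ε|^δ` on `[0, ε]` and `|log x|^δ` on `(ε, 1]`. -/
noncomputable def fTrunc (δ ε : ℝ) (x : ℝ) : ℝ :=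
  if x ≤ ε then |Real.log ε| ^ δ else |Real.log x| ^ δ

lemma rpow_sub_rpow_le_sub_rpow {a b δ : ℝ} (ha : 0 ≤ a) (hab : a ≤ b)
    (hδ0 : 0 ≤ δ) (hδ1 : δ ≤ 1) : b ^ δ - a ^ δ ≤ (b - a) ^ δ := by
  have hc : (0:ℝ) ≤ b - a := sub_nonneg.2 hab
  have := NNReal.rpow_add_le_add_rpow ⟨a, ha⟩ ⟨b - a, hc⟩ hδ0 hδ1
  have h2 : (⟨a, ha⟩ + ⟨b - a, hc⟩ : NNReal) = ⟨b, ha.trans hab⟩ := by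
    ext; show a + (b - a) = b; ring
  rw [h2] at this
  have h3 := NNReal.coe_le_coe.2 this
  change b ^ δ ≤ a ^ δ + (b - a) ^ δ at h3
  linarith

lemma abs_rpow_sub_rpow_le {a b δ : ℝ} (ha : 0 ≤ a) (hb : 0 ≤ b)
    (hδ0 : 0 ≤ δ) (hδ1 : δ ≤ 1) : |a ^ δ - b ^ δ| ≤ |a - b| ^ δ := by
  rcases le_total a b with h | h
  · rw [abs_sub_comm, abs_sub_comm a b, abs_of_nonneg (sub_nonneg.2 h),
      abs_of_nonneg (sub_nonneg.2 (Real.rpow_le_rpow ha h hδ0))]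
    exact rpow_sub_rpow_le_sub_rpow ha h hδ0 hδ1
  · rw [abs_of_nonneg (sub_nonneg.2 h),
      abs_of_nonneg (sub_nonneg.2 (Real.rpow_le_rpow hb h hδ0))]
    exact rpow_sub_rpow_le_sub_rpow hb h hδ0 hδ1

lemma log_lipschitz {ε a b : ℝ} (hε : 0 < ε) (ha : ε ≤ a) (hb : ε ≤ b) :
    |Real.log a - Real.log b| ≤ |a - b| / ε := by
  have key : ∀ u v : ℝ, ε ≤ u → ε ≤ v → v ≤ u →
      Real.log u - Real.log v ≤ (u - v) / ε := by
    intro u v hu hv hvu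
    have hv0 : 0 < v := hε.trans_le hv
    have hu0 : 0 < u := hε.trans_le hu
    rw [← Real.log_div (ne_of_gt hu0) (ne_of_gt hv0)]
    have h1 : Real.log (u / v) ≤ u / v - 1 := Real.log_le_sub_one_of_pos (by positivity)
    have h2 : u / v - 1 = (u - v) / v := by field_simp
    have h3 : (u - v) / v ≤ (u - v) / ε :=
      div_le_div_of_nonneg_left (sub_nonneg.2 hvu) hε hv |>.trans_eq rfl
    linarith
  rcases le_total a b with h | h
  · rw [abs_sub_comm, abs_sub_comm a b, abs_of_nonneg (sub_nonneg.2 h)]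
    have := key b a hb ha h
    have hlog : Real.log a ≤ Real.log b :=
      Real.log_le_log (hε.trans_le ha) h
    rw [abs_of_nonneg (sub_nonneg.2 hlog)]
    exact this
  · rw [abs_of_nonneg (sub_nonneg.2 h)]
    have hlog : Real.log b ≤ Real.log a :=
      Real.log_le_log (hε.trans_le hb) h
    rw [abs_of_nonneg (sub_nonneg.2 hlog)]
    exact key a b ha hb h

lemma fTrunc_eq_max (δ ε x : ℝ) : fTrunc δ ε x = |Real.log (max x ε)| ^ δ := by
  unfold fTrunc
  split_ifs with h
  · rw [max_eq_right h]
  · rw [max_eq_left (le_of_not_ge h)]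

/-- For `δ ∈ (0,1)` and `ε ∈ (0,1)`, the truncated observable `f_ε` is `δ`-Hölder on `[0,1]`
with constant `ε^{-δ}`. -/
theorem stmt10 (δ ε : ℝ) (hδ : δ ∈ Set.Ioo (0 : ℝ) 1) (hε : ε ∈ Set.Ioo (0 : ℝ) 1) :
    ∀ x ∈ Set.Icc (0 : ℝ) 1, ∀ y ∈ Set.Icc (0 : ℝ) 1,
      |fTrunc δ ε x - fTrunc δ ε y| ≤ ε ^ (-δ) * |x - y| ^ δ := by
  obtain ⟨hδ0, hδ1⟩ := hδ
  obtain ⟨hε0, hε1⟩ := hε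
  intro x hx y hy
  set x' := max x ε with hx'
  set y' := max y ε with hy'
  have hεx : ε ≤ x' := le_max_right _ _
  have hεy : ε ≤ y' := le_max_right _ _
  have hx1 : x' ≤ 1 := max_le hx.2 hε1.le
  have hy1 : y' ≤ 1 := max_le hy.2 hε1.le
  -- |log x'| = -log x' since x' ≤ 1
  have hlx : |Real.log x'| = -Real.log x' :=
    abs_of_nonpos (Real.log_nonpos (by positivity) hx1)
  have hly : |Real.log y'| = -Real.log y' :=
    abs_of_nonpos (Real.log_nonpos (by positivity) hy1)
  rw [fTrunc_eq_max, fTrunc_eq_max]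
  calc |(|Real.log x'|) ^ δ - (|Real.log y'|) ^ δ|
      ≤ |(|Real.log x'| - |Real.log y'|)| ^ δ :=
        abs_rpow_sub_rpow_le (abs_nonneg _) (abs_nonneg _) hδ0.le hδ1.le
    _ = |Real.log x' - Real.log y'| ^ δ := by
        rw [hlx, hly]; congr 1; rw [abs_sub_comm]; ring_nf
    _ ≤ (|x' - y'| / ε) ^ δ := by
        apply Real.rpow_le_rpow (abs_nonneg _) _ hδ0.le
        exact log_lipschitz hε0 hεx hεy
    _ ≤ (|x - y| / ε) ^ δ := by
        apply Real.rpow_le_rpow (by positivity) _ hδ0.le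
        apply div_le_div_of_nonneg_right _ hε0.le
        exact abs_max_sub_max_le_abs x y ε
    _ = ε ^ (-δ) * |x - y| ^ δ := by
        rw [div_eq_mul_inv, Real.mul_rpow (abs_nonneg _) (by positivity),
          Real.rpow_neg hε0.le, Real.inv_rpow hε0.le, mul_comm]
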